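/- Let G be a finite nontrivial group in which any two distinct conjugacy classes have distinct cardinalities. Then G is a rational group, i.e., for every g in G, all generators of the cyclic subgroup generated by g are conjugate in G. -/
import Mathlib

theorem stmt0 (G : Type*) [Group G] [Finite G] [Nontrivial G]
    (hdist : ∀ g h : G, Nat.card {x : G | IsConj g x} = Nat.card {x : G | IsConj h x} → IsConj g h) :
    ∀ g h : G, Subgroup.zpowers h = Subgroup.zpowers g → IsConj g h := by
  intro g h heq
  obtain ⟨k, hk⟩ := heq ▸ Subgroup.mem_zpowers h
  obtain ⟨m, hm⟩ := heq.symm ▸ Subgroup.mem_zpowers g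
  apply hdist
  -- key: x ↦ x^k maps class of g to class of h, inverse x ↦ x^m
  have key : ∀ x : G, IsConj g x → IsConj h (x ^ k) := by
    intro x hx
    rw [isConj_iff] at hx ⊢
    obtain ⟨c, rfl⟩ := hx
    exact ⟨c, by simp only [← hk]; exact conj_zpow.symm⟩
  have key2 : ∀ x : G, IsConj h x → IsConj g (x ^ m) := by
    intro x hx
    rw [isConj_iff] at hx ⊢
    obtain ⟨c, rfl⟩ := hx
    exact ⟨c, by simp only [← hm]; exact conj_zpow.symm⟩
  have hgkm : g ^ (k * m) = g := by rw [zpow_mul]; simp only [hk, hm]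
  have hhmk : h ^ (m * k) = h := by rw [zpow_mul]; simp only [hm, hk]
  refine Nat.card_congr ⟨fun x => ⟨x.1 ^ k, key x.1 x.2⟩, fun y => ⟨y.1 ^ m, key2 y.1 y.2⟩,
    fun x => ?_, fun y => ?_⟩
  · obtain ⟨x, hx⟩ := x
    obtain ⟨c, rfl⟩ := isConj_iff.mp hx
    simp only [Subtype.mk.injEq, ← zpow_mul]
    calc (c * g * c⁻¹) ^ (k * m) = c * g ^ (k * m) * c⁻¹ := conj_zpow
    _ = c * g * c⁻¹ := by rw [hgkm]
  · obtain ⟨y, hy⟩ := y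
    obtain ⟨c, rfl⟩ := isConj_iff.mp hy
    simp only [Subtype.mk.injEq, ← zpow_mul]
    calc (c * h * c⁻¹) ^ (m * k) = c * h ^ (m * k) * c⁻¹ := conj_zpow
    _ = c * h * c⁻¹ := by rw [hhmk]
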